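/- Let C ≤ F be a k-dimensional code, n = dim F, and A a collection of subspaces with duals forming a collection of perfect spaces. Let t_j = min{dim A : A ∈ A, dim(C∩A) ≥ j} and s_1^⊥ = min{dim A : A ∈ Ā (duals of A), dim(C^⊥ ∩ A) ≥ 1}. Then B_a^{(j)}(C) = Σ_{A ∈ A_a} [dim(C∩A) choose j]_q equals 0 if a < t_j, and equals [k+a−n choose j]_q · |A_a| if a > n − s_1^⊥, where A_a is the set of elements of A of dimension a. -/

import Mathlib

open scoped Classical

noncomputable section

namespace TensorCodes

/-- The Gaussian (`q`-binomial) coefficient for integer arguments, following the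
definition in the paper. -/
def qbin (q : ℚ) (a b : ℤ) : ℚ :=
  if b < 0 then 0
  else if b = 0 then 1
  else if a < 0 then
    (-1) ^ b.toNat * q ^ (a * b - b * (b - 1) / 2) *
      ∏ i ∈ Finset.range b.toNat, (q ^ (-a + b - 1 - (i : ℤ)) - 1) / (q ^ ((i : ℤ) + 1) - 1)
  else if a < b then 0
  else ∏ i ∈ Finset.range b.toNat, (q ^ (a - (i : ℤ)) - 1) / (q ^ ((i : ℤ) + 1) - 1)

variable {K : Type} [Field K] [Fintype K] {r : ℕ} {n : Fin r → ℕ}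

/-- A simple (rank-one) tensor `u⁽¹⁾ ⊗ ⋯ ⊗ u⁽ʳ⁾`, in the identification of
`𝔽_q^{n_1} ⊗ ⋯ ⊗ 𝔽_q^{n_r}` with the space of `r`-dimensional arrays. -/
def simpleTensor (u : ∀ i, Fin (n i) → K) : ((i : Fin r) → Fin (n i)) → K :=
  fun J => ∏ i, u i (J i)

/-- The tensor product `U₁ ⊗ ⋯ ⊗ U_r` of subspaces `U i ≤ 𝔽_q^{n_i}`, identified with the
subspace of the array space spanned by the corresponding simple tensors. -/
def tp (U : ∀ i, Submodule K (Fin (n i) → K)) :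
    Submodule K (((i : Fin r) → Fin (n i)) → K) :=
  Submodule.span K {X | ∃ u : ∀ i, Fin (n i) → K, (∀ i, u i ∈ U i) ∧ X = simpleTensor u}

/-- The dual (orthogonal complement) of a tensor code with respect to the nondegenerate
bilinear form `X * Y = ∑_J X_J Y_J`. -/
def tdual (C : Submodule K (((i : Fin r) → Fin (n i)) → K)) :
    Submodule K (((i : Fin r) → Fin (n i)) → K) where
  carrier := {X | ∀ Y ∈ C, ∑ J, X J * Y J = 0}
  add_mem' := by
    intro a b ha hb Y hY
    have h : ∑ J, (a J * Y J + b J * Y J) = 0 := by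
      rw [Finset.sum_add_distrib, ha Y hY, hb Y hY, add_zero]
    simpa [add_mul] using h
  zero_mem' := by intro Y hY; simp
  smul_mem' := by
    intro c a ha Y hY
    have h := ha Y hY
    simp only [Pi.smul_apply, smul_eq_mul, mul_assoc]
    rw [← Finset.mul_sum, h, mul_zero]

/-- The orthogonal complement of a subspace of `𝔽_q^m` with respect to the dot product. -/
def vdual {m : ℕ} (U : Submodule K (Fin m → K)) : Submodule K (Fin m → K) where
  carrier := {x | ∀ y ∈ U, ∑ t, x t * y t = 0}
  add_mem' := by
    intro a b ha hb y hy
    have h : ∑ t, (a t * y t + b t * y t) = 0 := by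
      rw [Finset.sum_add_distrib, ha y hy, hb y hy, add_zero]
    simpa [add_mul] using h
  zero_mem' := by intro y hy; simp
  smul_mem' := by
    intro c a ha y hy
    have h := ha y hy
    simp only [Pi.smul_apply, smul_eq_mul, mul_assoc]
    rw [← Finset.mul_sum, h, mul_zero]

/-- A subspace is perfect if it is spanned by the simple (rank-one) tensors it contains. -/
def IsPerfect (A : Submodule K (((i : Fin r) → Fin (n i)) → K)) : Prop :=
  A = Submodule.span K ((A : Set (((i : Fin r) → Fin (n i)) → K)) ∩
    {X | ∃ u : ∀ i, Fin (n i) → K, X = simpleTensor u})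

/-- The tensor rank of an `r`-tensor: the least number of simple tensors summing to it. -/
def trank (X : ((i : Fin r) → Fin (n i)) → K) : ℕ :=
  sInf {R | ∃ u : Fin R → ∀ i, Fin (n i) → K, X = ∑ s, simpleTensor (u s)}

/-- The minimum tensor-rank distance of a (nonzero) tensor code. -/
def minDist (C : Submodule K (((i : Fin r) → Fin (n i)) → K)) : ℕ :=
  sInf {d | ∃ X ∈ C, X ≠ (0 : ((i : Fin r) → Fin (n i)) → K) ∧ trank X = d}

/-- The tensor rank of a tensor code: the minimum dimension of a perfect space containing it. -/
def trk (C : Submodule K (((i : Fin r) → Fin (n i)) → K)) : ℕ :=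
  sInf {a | ∃ A : Submodule K (((i : Fin r) → Fin (n i)) → K),
    IsPerfect A ∧ C ≤ A ∧ Module.finrank K ↥A = a}

/-- The `j`-th generalized tensor weight of `C` with respect to a collection `𝒜` of
anticodes:  the minimum dimension of a member of `𝒜` meeting `C` in dimension at least `j`. -/
def genW {V : Type} [AddCommGroup V] [Module K V] (𝒜 : Set (Submodule K V))
    (C : Submodule K V) (j : ℕ) : ℕ :=
  sInf {a | ∃ A ∈ 𝒜, Module.finrank K ↥A = a ∧ j ≤ Module.finrank K ↥(C ⊓ A)}


private lemma qbin_eq_zero' {q : ℚ} {m j : ℤ} (hm : 0 ≤ m) (hj : 1 ≤ j) (h : m < j) :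
    qbin q m j = 0 := by
  unfold qbin
  rw [if_neg (by omega), if_neg (by omega), if_neg (by omega), if_pos h]

private def dotB (K : Type) [Field K] {r : ℕ} {n : Fin r → ℕ} :
    LinearMap.BilinForm K (((i : Fin r) → Fin (n i)) → K) :=
  LinearMap.mk₂ K (fun X Y => ∑ J, X J * Y J)
    (fun X X' Y => by simp [add_mul, Finset.sum_add_distrib])
    (fun c X Y => by simp [Finset.mul_sum, mul_assoc])
    (fun X Y Y' => by simp [mul_add, Finset.sum_add_distrib])
    (fun c X Y => by simp [Finset.mul_sum]; ring_nf; simp [mul_comm, mul_left_comm])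

private lemma dotB_apply (X Y : ((i : Fin r) → Fin (n i)) → K) :
    dotB K X Y = ∑ J, X J * Y J := rfl

private lemma dotB_symm : (dotB K (r := r) (n := n)).IsSymm := by
  refine ⟨fun X Y => ?_⟩
  simp [dotB_apply, mul_comm]

private lemma dotB_nondeg : (dotB K (r := r) (n := n)).Nondegenerate := by
  constructor
  · intro X hX
    funext J
    have := hX (Pi.single J 1)
    simpa [dotB_apply, Pi.single_apply, mul_ite, Finset.sum_ite_eq'] using this
  · intro X hX
    funext J
    have := hX (Pi.single J 1)
    simpa [dotB_apply, Pi.single_apply, ite_mul, Finset.sum_ite_eq'] using this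

private lemma tdual_eq_orthogonal (C : Submodule K (((i : Fin r) → Fin (n i)) → K)) :
    tdual C = (dotB K).orthogonal C := by
  ext X
  simp only [LinearMap.BilinForm.mem_orthogonal_iff, LinearMap.BilinForm.IsOrtho]
  constructor
  · intro hX Y hY
    have h := hX Y hY
    rw [dotB_apply]
    rw [Finset.sum_congr rfl (fun J _ => mul_comm (Y J) (X J))]
    exact h
  · intro hX Y hY
    have h := hX Y hY
    rw [dotB_apply, Finset.sum_congr rfl (fun J _ => mul_comm (Y J) (X J))] at h
    exact h

private lemma finrank_space :
    Module.finrank K (((i : Fin r) → Fin (n i)) → K) = ∏ i, n i := by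
  rw [Module.finrank_fintype_fun_eq_card, Fintype.card_pi]
  simp

private lemma finrank_tdual (C : Submodule K (((i : Fin r) → Fin (n i)) → K)) :
    Module.finrank K ↥(tdual C) = ∏ i, n i - Module.finrank K ↥C := by
  rw [tdual_eq_orthogonal, LinearMap.BilinForm.finrank_orthogonal dotB_nondeg, finrank_space]

private lemma finrank_le_space (C : Submodule K (((i : Fin r) → Fin (n i)) → K)) :
    Module.finrank K ↥C ≤ ∏ i, n i := by
  rw [← finrank_space (K := K) (n := n)]
  exact Submodule.finrank_le C

private lemma tdual_sup (C A : Submodule K (((i : Fin r) → Fin (n i)) → K)) :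
    tdual (C ⊔ A) = tdual C ⊓ tdual A := by
  simp only [tdual_eq_orthogonal]
  ext X
  simp only [Submodule.mem_inf, LinearMap.BilinForm.mem_orthogonal_iff,
    LinearMap.BilinForm.IsOrtho]
  constructor
  · exact fun h => ⟨fun Y hY => h Y (Submodule.mem_sup_left hY),
      fun Y hY => h Y (Submodule.mem_sup_right hY)⟩
  · rintro ⟨h1, h2⟩ Y hY
    obtain ⟨c, hc, b, hb, rfl⟩ := Submodule.mem_sup.1 hY
    rw [map_add, LinearMap.add_apply, h1 c hc, h2 b hb, add_zero]



/-- if `a < t_j` then `B_a^{(j)}(C) = 0`, and if `a > n − s_1^⊥` then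
`B_a^{(j)}(C) = [k+a−n, j]_q · |𝒜_a|`, for a collection `𝒜` whose duals are perfect. -/
theorem binomial_moment_extremes
    (𝒜 : Finset (Submodule K (((i : Fin r) → Fin (n i)) → K)))
    (hperf : ∀ A ∈ 𝒜, IsPerfect (tdual A))
    (C : Submodule K (((i : Fin r) → Fin (n i)) → K))
    (a j : ℕ) (hj1 : 1 ≤ j) (hjk : j ≤ Module.finrank K ↥C) (ha : a ≤ ∏ i, n i) :
    (a < genW (↑𝒜 : Set (Submodule K (((i : Fin r) → Fin (n i)) → K))) C j →
        ∑ A ∈ 𝒜.filter (fun A : Submodule K (((i : Fin r) → Fin (n i)) → K) => Module.finrank K ↥A = a),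
            qbin (Fintype.card K : ℚ) (Module.finrank K ↥(C ⊓ A) : ℤ) (j : ℤ) = 0)
      ∧ ((∏ i, n i)
            - sInf {b | ∃ A ∈ 𝒜, Module.finrank K ↥(tdual A) = b ∧
                1 ≤ Module.finrank K ↥(tdual C ⊓ tdual A)} < a →
          ∑ A ∈ 𝒜.filter (fun A : Submodule K (((i : Fin r) → Fin (n i)) → K) => Module.finrank K ↥A = a),
              qbin (Fintype.card K : ℚ) (Module.finrank K ↥(C ⊓ A) : ℤ) (j : ℤ)
            = qbin (Fintype.card K : ℚ)
                ((Module.finrank K ↥C : ℤ) + (a : ℤ) - ∏ i, (n i : ℤ)) (j : ℤ)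
              * (𝒜.filter (fun A : Submodule K (((i : Fin r) → Fin (n i)) → K) => Module.finrank K ↥A = a)).card) := by
  constructor
  · intro hlt
    apply Finset.sum_eq_zero
    intro A hA
    rw [Finset.mem_filter] at hA
    have hdim : Module.finrank K ↥(C ⊓ A) < j := by
      by_contra h
      push_neg at h
      have : genW (↑𝒜) C j ≤ a := Nat.sInf_le ⟨A, hA.1, hA.2, h⟩
      omega
    exact qbin_eq_zero' (by positivity) (by exact_mod_cast hj1) (by exact_mod_cast hdim)
  · intro hgt
    set N : ℕ := ∏ i, n i with hNdef
    set s : ℕ := sInf {b | ∃ A ∈ 𝒜, Module.finrank K ↥(tdual A) = b ∧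
        1 ≤ Module.finrank K ↥(tdual C ⊓ tdual A)} with hsdef
    have hNcast : (∏ i, (n i : ℤ)) = (N : ℤ) := by
      rw [hNdef]; push_cast; rfl
    have key : ∀ A ∈ 𝒜.filter (fun A : Submodule K (((i : Fin r) → Fin (n i)) → K) =>
        Module.finrank K ↥A = a),
        qbin (Fintype.card K : ℚ) (Module.finrank K ↥(C ⊓ A) : ℤ) (j : ℤ)
          = qbin (Fintype.card K : ℚ)
              ((Module.finrank K ↥C : ℤ) + (a : ℤ) - ∏ i, (n i : ℤ)) (j : ℤ) := by
      intro A hA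
      rw [Finset.mem_filter] at hA
      have hdA : Module.finrank K ↥(tdual A) = N - a := by
        rw [finrank_tdual, hA.2]
      have hzero : Module.finrank K ↥(tdual C ⊓ tdual A) = 0 := by
        by_contra h
        have h1 : 1 ≤ Module.finrank K ↥(tdual C ⊓ tdual A) := by omega
        have hmem : (N - a) ∈ {b | ∃ A ∈ 𝒜, Module.finrank K ↥(tdual A) = b ∧
            1 ≤ Module.finrank K ↥(tdual C ⊓ tdual A)} := ⟨A, hA.1, hdA, h1⟩
        have := Nat.sInf_le hmem
        omega
      have hbot : tdual C ⊓ tdual A = ⊥ := Submodule.finrank_eq_zero.1 hzero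
      have hsup : Module.finrank K ↥(C ⊔ A) = N := by
        have h1 : Module.finrank K ↥(tdual (C ⊔ A)) = N - Module.finrank K ↥(C ⊔ A) :=
          finrank_tdual _
        rw [tdual_sup, hbot] at h1
        have h2 : Module.finrank K ↥(C ⊔ A) ≤ N := finrank_le_space _
        simp only [finrank_bot] at h1
        omega
      have hdim : Module.finrank K ↥(C ⊔ A) + Module.finrank K ↥(C ⊓ A)
          = Module.finrank K ↥C + Module.finrank K ↥A :=
        Submodule.finrank_sup_add_finrank_inf_eq C A
      have hCle : Module.finrank K ↥C ≤ N := finrank_le_space _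
      have : (Module.finrank K ↥(C ⊓ A) : ℤ)
          = (Module.finrank K ↥C : ℤ) + (a : ℤ) - (N : ℤ) := by
        rw [hsup, hA.2] at hdim
        omega
      rw [this, hNcast]
    rw [Finset.sum_congr rfl key, Finset.sum_const, nsmul_eq_mul, mul_comm]

end TensorCodes
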